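/- Let K ∈ 𝓢(ℝⁿ), 0 < ε < 1, and let U be a neighborhood of 0 in ℝⁿ with ‖osc_U K‖_{L¹} ≤ ε. Let Γ ⊂ ℝⁿ be a regular sampling set with a Γ-tile W ⊆ U. Then for every bounded continuous function f on ℝⁿ satisfying f(x) = (f * K)(x) for all x, one has (1−ε)·sup_{x∈ℝⁿ}|f(x)| ≤ sup_{γ∈Γ}|f(γ)| ≤ (1+ε)·sup_{x∈ℝⁿ}|f(x)|. -/

import Mathlib

open MeasureTheory
open scoped ENNReal

/-- Convolution `(f * g)(x) = ∫ f(y) g(x − y) dy` on `ℝⁿ`. -/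
noncomputable def conv (n : ℕ) (f g : EuclideanSpace ℝ (Fin n) → ℂ) :
    EuclideanSpace ℝ (Fin n) → ℂ :=
  fun x => ∫ y, f y * g (x - y)

/-- `Γ` is a regular sampling set of `ℝⁿ` with `Γ`-tile `W`: `Γ` is countable, `W` is a
relatively compact (= bounded) Borel neighborhood of `0`, the translates `γ + W` cover
`ℝⁿ` up to a null set, and any two distinct translates overlap in a null set. -/
def IsRegSampling (n : ℕ) (Γ W : Set (EuclideanSpace ℝ (Fin n))) : Prop :=
  Γ.Countable ∧ MeasurableSet W ∧ W ∈ nhds (0 : EuclideanSpace ℝ (Fin n)) ∧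
    Bornology.IsBounded W ∧
    volume ((Set.univ : Set (EuclideanSpace ℝ (Fin n))) \ ⋃ γ ∈ Γ, (γ + ·) '' W) = 0 ∧
    Γ.Pairwise fun γ γ' => volume (((γ + ·) '' W) ∩ ((γ' + ·) '' W)) = 0

/-- Proposition 5.6 of Führ–Mayeli (Euclidean case, `p = ∞`): if `f` is bounded,
continuous, and reproduced by convolution with the Schwartz kernel `K`,
`‖osc_U K‖₁ ≤ ε < 1`, and `Γ` is a regular sampling set with a `Γ`-tile `W ⊆ U`, then
`(1−ε)·sup_x |f(x)| ≤ sup_{γ∈Γ} |f(γ)| ≤ (1+ε)·sup_x |f(x)|`. -/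
theorem sampling_inequality_Linfty (n : ℕ)
    (K : SchwartzMap (EuclideanSpace ℝ (Fin n)) ℂ)
    (ε : ℝ) (hε0 : 0 < ε) (hε1 : ε < 1)
    (U : Set (EuclideanSpace ℝ (Fin n))) (hU : U ∈ nhds (0 : EuclideanSpace ℝ (Fin n)))
    (hosc : (∫⁻ x, ⨆ y ∈ U, (‖K x - K (x - y)‖₊ : ℝ≥0∞)) ≤ ENNReal.ofReal ε)
    (Γ W : Set (EuclideanSpace ℝ (Fin n))) (hreg : IsRegSampling n Γ W) (hWU : W ⊆ U)
    (f : EuclideanSpace ℝ (Fin n) → ℂ) (hfc : Continuous f)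
    (hfb : ∃ M : ℝ, ∀ x, ‖f x‖ ≤ M)
    (hrep : ∀ x, f x = conv n f (⇑K) x) :
    (1 - ε) * (⨆ x : EuclideanSpace ℝ (Fin n), ‖f x‖) ≤
        (⨆ γ : Γ, ‖f (γ : EuclideanSpace ℝ (Fin n))‖) ∧
      (⨆ γ : Γ, ‖f (γ : EuclideanSpace ℝ (Fin n))‖) ≤
        (1 + ε) * ⨆ x : EuclideanSpace ℝ (Fin n), ‖f x‖ := by
  obtain ⟨M, hM⟩ := hfb
  obtain ⟨hΓc, hWm, hW0, hWb, hcover, hdisj⟩ := hreg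
  set S : ℝ := ⨆ x : EuclideanSpace ℝ (Fin n), ‖f x‖ with hSdef
  have hbddS : BddAbove (Set.range fun x : EuclideanSpace ℝ (Fin n) => ‖f x‖) :=
    ⟨M, by rintro _ ⟨x, rfl⟩; exact hM x⟩
  have hfS : ∀ x, ‖f x‖ ≤ S := fun x => le_ciSup hbddS x
  have hS0 : (0 : ℝ) ≤ S := le_trans (norm_nonneg _) (hfS 0)
  -- Γ is nonempty
  have hΓne : Γ.Nonempty := by
    by_contra h
    rw [Set.not_nonempty_iff_eq_empty] at h
    subst h
    simp only [Set.mem_empty_iff_false, Set.iUnion_of_empty, Set.iUnion_empty,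
      Set.diff_empty] at hcover
    exact (isOpen_univ.measure_pos volume ⟨0, trivial⟩).ne' hcover
  haveI : Nonempty Γ := hΓne.to_subtype
  set T : ℝ := ⨆ γ : Γ, ‖f (γ : EuclideanSpace ℝ (Fin n))‖ with hTdef
  have hbddT : BddAbove (Set.range fun γ : Γ => ‖f (γ : EuclideanSpace ℝ (Fin n))‖) :=
    ⟨M, by rintro _ ⟨γ, rfl⟩; exact hM _⟩
  have hTγ : ∀ γ ∈ Γ, ‖f γ‖ ≤ T := fun γ hγ => le_ciSup hbddT ⟨γ, hγ⟩
  have hTS : T ≤ S := ciSup_le fun γ => hfS _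
  -- integrability facts
  have hKint : Integrable (⇑K) volume := K.integrable
  have hKx : ∀ x : EuclideanSpace ℝ (Fin n), Integrable (fun y => K (x - y)) volume :=
    fun x => hKint.comp_sub_left x
  have hfm : AEStronglyMeasurable f volume := hfc.aestronglyMeasurable
  have hfKint : ∀ x : EuclideanSpace ℝ (Fin n),
      Integrable (fun y => f y * K (x - y)) volume :=
    fun x => (hKx x).bdd_mul hfm (ae_of_all _ hM)
  -- key oscillation estimate
  have key : ∀ γ : EuclideanSpace ℝ (Fin n), ∀ w ∈ W, ‖f (γ + w)‖ ≤ ‖f γ‖ + ε * S := by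
    intro γ w hw
    have hwU : w ∈ U := hWU hw
    have hΔint : Integrable (fun y => K (γ + w - y) - K (γ - y)) volume :=
      (hKx (γ + w)).sub (hKx γ)
    have hdiff : f (γ + w) - f γ = ∫ y, f y * (K (γ + w - y) - K (γ - y)) := by
      rw [hrep (γ + w), hrep γ]
      simp only [conv]
      rw [← integral_sub (hfKint (γ + w)) (hfKint γ)]
      simp_rw [mul_sub]
    -- the L¹ bound on translates of K
    have hg_le : (∫ t, ‖K t - K (t - w)‖) ≤ ε := by
      have hgi : Integrable (fun t => K t - K (t - w)) volume :=
        hKint.sub (hKint.comp_sub_right w)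
      rw [integral_norm_eq_lintegral_enorm hgi.aestronglyMeasurable]
      refine ENNReal.toReal_le_of_le_ofReal hε0.le (le_trans ?_ hosc)
      refine lintegral_mono fun t => ?_
      exact le_biSup (fun y => (‖K t - K (t - y)‖₊ : ℝ≥0∞)) hwU
    have habel : ∀ y : EuclideanSpace ℝ (Fin n), γ + w - y - w = γ - y := fun y => by abel
    have hint_eq : (∫ y, ‖K (γ + w - y) - K (γ - y)‖) = ∫ t, ‖K t - K (t - w)‖ := by
      have := integral_sub_left_eq_self (fun t => ‖K t - K (t - w)‖) volume (γ + w)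
      rw [← this]
      congr 1
      ext y
      rw [habel y]
    have hb : ‖f (γ + w) - f γ‖ ≤ ε * S := by
      rw [hdiff]
      calc ‖∫ y, f y * (K (γ + w - y) - K (γ - y))‖
          ≤ ∫ y, ‖f y * (K (γ + w - y) - K (γ - y))‖ := norm_integral_le_integral_norm _
        _ ≤ ∫ y, S * ‖K (γ + w - y) - K (γ - y)‖ := by
            refine integral_mono (hΔint.bdd_mul hfm (ae_of_all _ hM)).norm (hΔint.norm.const_mul S)
              fun y => ?_
            rw [norm_mul]
            exact mul_le_mul_of_nonneg_right (hfS y) (norm_nonneg _)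
        _ = S * ∫ y, ‖K (γ + w - y) - K (γ - y)‖ := integral_const_mul S _
        _ ≤ S * ε := by
            rw [hint_eq]
            exact mul_le_mul_of_nonneg_left hg_le hS0
        _ = ε * S := mul_comm _ _
    calc ‖f (γ + w)‖ = ‖f γ + (f (γ + w) - f γ)‖ := by ring_nf
      _ ≤ ‖f γ‖ + ‖f (γ + w) - f γ‖ := norm_add_le _ _
      _ ≤ ‖f γ‖ + ε * S := by linarith [hb]
  -- bound on the tiling set
  have hD : ∀ x ∈ (⋃ γ ∈ Γ, (γ + ·) '' W), ‖f x‖ ≤ T + ε * S := by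
    intro x hx
    simp only [Set.mem_iUnion, Set.mem_image] at hx
    obtain ⟨γ, hγ, w, hw, rfl⟩ := hx
    exact le_trans (key γ w hw) (add_le_add_left (hTγ γ hγ) _)
  -- bound everywhere, by continuity and fullness of the tiling
  have hall : ∀ x, ‖f x‖ ≤ T + ε * S := by
    by_contra h
    push_neg at h
    obtain ⟨x, hx⟩ := h
    have hAopen : IsOpen {z : EuclideanSpace ℝ (Fin n) | T + ε * S < ‖f z‖} :=
      isOpen_lt continuous_const hfc.norm
    have hApos : 0 < volume {z : EuclideanSpace ℝ (Fin n) | T + ε * S < ‖f z‖} :=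
      hAopen.measure_pos volume ⟨x, hx⟩
    have hAsub : {z : EuclideanSpace ℝ (Fin n) | T + ε * S < ‖f z‖} ⊆
        (Set.univ : Set (EuclideanSpace ℝ (Fin n))) \ ⋃ γ ∈ Γ, (γ + ·) '' W := by
      intro z hz
      refine ⟨trivial, fun hzD => ?_⟩
      exact absurd (hD z hzD) (not_le.mpr hz)
    exact absurd (measure_mono_null hAsub hcover) hApos.ne'
  have hST : S ≤ T + ε * S := ciSup_le hall
  constructor
  · nlinarith [hST]
  · nlinarith [hTS, hS0]
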